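/- Let G = (V,E) be a simple graph with m ≥ 4 edges. Then for every edge e of G, |NB₂(G/e)| ≥ (m−1)(m−3)/8. -/

import Mathlib

open Finset

variable {V : Type*}

/-- The number of proper colorings of `G` using the colors `{1, …, k}`. -/
noncomputable def propCol (G : SimpleGraph V) (k : ℕ) : ℕ :=
  Set.ncard {f : V → ℕ | (∀ v, f v ∈ Finset.Icc 1 k) ∧ ∀ ⦃a b : V⦄, G.Adj a b → f a ≠ f b}

/-- The number of `L`-colorings of `G`, for an assignment `L` of color lists. -/
noncomputable def listCol (G : SimpleGraph V) (L : V → Finset ℕ) : ℕ :=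
  Set.ncard {f : V → ℕ | (∀ v, f v ∈ L v) ∧ ∀ ⦃a b : V⦄, G.Adj a b → f a ≠ f b}

/-- `α(uv) = |L(u) \ L(v)|`, symmetrized (when `|L(u)| = |L(v)|` one has
`|L(u) \ L(v)| = |L(v) \ L(u)|`, so this is exactly `|L(u) \ L(v)|`). -/
noncomputable def alphaL (L : V → Finset ℕ) : Sym2 V → ℕ :=
  Sym2.lift ⟨fun a b => ((L a) \ (L b)).card ⊔ ((L b) \ (L a)).card,
    fun a b => by simp [sup_comm]⟩

/-- `B` is the edge set of a broken cycle of `G` with respect to the edge ordering `η`: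
the edge set of a path `v₁v₂⋯v_r` of `G` with `r ≥ 3` such that `v₁v_r ∈ E(G)` and
`η(v₁v_r) < η(v_iv_{i+1})` for each `i`. -/
def IsBrokenCycle [DecidableEq V] (G : SimpleGraph V) (η : Sym2 V → ℕ)
    (B : Finset (Sym2 V)) : Prop :=
  ∃ (u w : V) (p : G.Walk u w), p.IsPath ∧ 2 ≤ p.length ∧ G.Adj u w ∧
    (∀ f ∈ p.edges, η s(u, w) < η f) ∧ B = p.edges.toFinset

/-- `NB_i(G)`: the collection of `i`-element subsets of `E(G)` containing no broken cycle. -/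
def NBset [DecidableEq V] (G : SimpleGraph V) (η : Sym2 V → ℕ) (i : ℕ) :
    Set (Finset (Sym2 V)) :=
  {A : Finset (Sym2 V) | ↑A ⊆ G.edgeSet ∧ A.card = i ∧
    ∀ B : Finset (Sym2 V), IsBrokenCycle G η B → ¬ B ⊆ A}

/-- `|NB_i(G)|`. -/
noncomputable def NBcard [DecidableEq V] (G : SimpleGraph V) (η : Sym2 V → ℕ) (i : ℕ) : ℕ :=
  Set.ncard (NBset G η i)

/-- `|NB_i(G, e)|`: the number of `i`-element subsets of `E(G)` that contain `e`
and contain no broken cycle. -/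
noncomputable def NBe [DecidableEq V] (G : SimpleGraph V) (η : Sym2 V → ℕ)
    (i : ℕ) (e : Sym2 V) : ℕ :=
  Set.ncard {A : Finset (Sym2 V) | A ∈ NBset G η i ∧ e ∈ A}

/-- `Q_η(G, e, x)`, where `n` is the number of vertices of `G`. -/
noncomputable def Qeta [DecidableEq V] [Fintype V] (G : SimpleGraph V)
    (η : Sym2 V → ℕ) (e : Sym2 V) (x : ℝ) : ℝ :=
  (∑ i ∈ (Finset.Icc 1 (Fintype.card V - 1)).filter (fun i => Odd i),
      (NBe G η i e : ℝ) / i * x ^ (Fintype.card V - i)) -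
  ∑ i ∈ (Finset.Icc 2 (Fintype.card V - 1)).filter (fun i => Even i),
      (NBe G η i e : ℝ) * x ^ (Fintype.card V - i)

/-- The contraction `G/e` of the edge `e = uv`: the vertex `v` is merged into `u`
(so `v` becomes an isolated vertex), loops are removed and parallel edges are merged. -/
def contractE (G : SimpleGraph V) (u v : V) : SimpleGraph V :=
  SimpleGraph.fromRel (fun a b =>
    (G.Adj a b ∧ a ≠ v ∧ b ≠ v) ∨ (a = u ∧ b ≠ v ∧ G.Adj v b))

/-- The number of triangles (3-cliques) of `H`. -/
noncomputable def triangleCount (H : SimpleGraph V) : ℕ :=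
  Set.ncard {s : Finset V | H.IsNClique 3 s}

/-- `|NB₂(H)| = C(|E(H)|, 2) − △(H)`: the number of 2-element subsets of `E(H)`
containing no broken cycle (this count is independent of the edge ordering). -/
noncomputable def NB2 (H : SimpleGraph V) : ℕ :=
  Nat.choose (H.edgeSet.ncard) 2 - triangleCount H

/-- `C` is the edge set of a 4-cycle of `G`. -/
def IsFourCycle [DecidableEq V] (G : SimpleGraph V) (C : Finset (Sym2 V)) : Prop :=
  ∃ (u : V) (p : G.Walk u u), p.IsCycle ∧ p.length = 4 ∧ C = p.edges.toFinset

/-- The number of 4-cycles of `G` containing the edge `e`. -/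
noncomputable def fourCyclesOn [DecidableEq V] (G : SimpleGraph V) (e : Sym2 V) : ℕ :=
  Set.ncard {C : Finset (Sym2 V) | IsFourCycle G C ∧ e ∈ C}

/-- `c₄(G)`: the maximum over edges `e` of the number of 4-cycles of `G` containing `e`,
i.e. the least `r` such that every edge lies in at most `r` 4-cycles. -/
noncomputable def c4 [DecidableEq V] (G : SimpleGraph V) : ℕ :=
  sSup {r : ℕ | ∃ e ∈ G.edgeSet, r = fourCyclesOn G e}

/-- `β(T)` for the connected component `c` of `H`: the number of colors lying in every
list `L w` for `w` a vertex of the component `c`. -/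
noncomputable def betaComp (L : V → Finset ℕ) (H : SimpleGraph V)
    (c : H.ConnectedComponent) : ℕ :=
  Set.ncard {x : ℕ | ∀ w : V, H.connectedComponentMk w = c → x ∈ L w}

/-- `∏_j β(T_j)` over the connected components `T_j` of the spanning subgraph `H`. -/
noncomputable def betaProd (L : V → Finset ℕ) (H : SimpleGraph V) : ℕ :=
  ∏ᶠ c : H.ConnectedComponent, betaComp L H c


section AuxiliaryForStmt14

open Finset

variable {V : Type*}

lemma contractE_adj' (G : SimpleGraph V) {u v : V} (huv : G.Adj u v) (a b : V) :
    (contractE G u v).Adj a b ↔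
      a ≠ b ∧ a ≠ v ∧ b ≠ v ∧ (G.Adj a b ∨ (a = u ∧ G.Adj v b) ∨ (b = u ∧ G.Adj v a)) := by
  have huv' : u ≠ v := huv.ne
  rw [contractE, SimpleGraph.fromRel_adj]
  constructor
  · rintro ⟨hab, (⟨h1,h2,h3⟩|⟨h1,h2,h3⟩)|(⟨h1,h2,h3⟩|⟨h1,h2,h3⟩)⟩
    · exact ⟨hab, h2, h3, Or.inl h1⟩
    · exact ⟨hab, h1 ▸ huv', h2, Or.inr (Or.inl ⟨h1, h3⟩)⟩
    · exact ⟨hab, h3, h2, Or.inl h1.symm⟩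
    · exact ⟨hab, h2, h1 ▸ huv', Or.inr (Or.inr ⟨h1, h3⟩)⟩
  · rintro ⟨hab, hav, hbv, (h|⟨h1,h2⟩|⟨h1,h2⟩)⟩
    · exact ⟨hab, Or.inl (Or.inl ⟨h, hav, hbv⟩)⟩
    · exact ⟨hab, Or.inl (Or.inr ⟨h1, hbv, h2⟩)⟩
    · exact ⟨hab, Or.inr (Or.inr ⟨h1, hav, h2⟩)⟩

noncomputable def sym2pair [DecidableEq V] : Sym2 V → Finset V :=
  Sym2.lift ⟨fun x y => {x,y}, fun x y => Finset.pair_comm x y⟩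

lemma sym2pair_mk [DecidableEq V] (x y : V) : sym2pair s(x,y) = {x,y} := rfl

lemma pair_eq_sym2 [DecidableEq V] {x y a b : V} (hxy : x ≠ y)
    (h : ({x,y} : Finset V) = {a,b}) : s(x,y) = s(a,b) := by
  have hx : x ∈ ({a,b} : Finset V) := h ▸ (by simp)
  have hy : y ∈ ({a,b} : Finset V) := h ▸ (by simp)
  have ha : a ∈ ({x,y} : Finset V) := h ▸ (by simp)
  simp only [Finset.mem_insert, Finset.mem_singleton] at hx hy ha
  rcases hx with rfl|rfl
  · rcases hy with rfl|rfl
    · exact absurd rfl hxy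
    · rfl
  · rcases hy with rfl|rfl
    · exact Sym2.eq_swap
    · rcases ha with rfl|rfl
      · rfl
      · exact absurd rfl hxy

lemma arith_main (q d t a b m : ℕ) (ha1 : a ≤ q) (ha2 : 2*a ≤ d*(d-1)) (hb : 6*b ≤ q*(q-1))
    (ht : t ≤ d) (hm : m ≤ q+d+t+1) (hm4 : 4 ≤ m) :
    ((m:ℝ)-1)*((m:ℝ)-3)/8 ≤ ((q:ℝ)+d)*((q:ℝ)+(d:ℝ)-1)/2 - a - b := by
  have ha2' : 2*(a:ℝ) ≤ (d:ℝ)*((d:ℝ)-1) := by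
    rcases Nat.eq_zero_or_pos d with h|h
    · subst h; simp at ha2; simp [ha2]
    · have := (Nat.cast_le (α := ℝ)).mpr ha2
      push_cast [Nat.cast_sub h] at this; linarith
  have hb' : 6*(b:ℝ) ≤ (q:ℝ)*((q:ℝ)-1) := by
    rcases Nat.eq_zero_or_pos q with h|h
    · subst h; simp at hb; simp [hb]
    · have := (Nat.cast_le (α := ℝ)).mpr hb
      push_cast [Nat.cast_sub h] at this; linarith
  have ha1' : (a:ℝ) ≤ q := by exact_mod_cast ha1
  have ht' : (t:ℝ) ≤ d := by exact_mod_cast ht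
  have hm' : (m:ℝ) ≤ (q:ℝ)+d+t+1 := by exact_mod_cast hm
  have hm4' : (4:ℝ) ≤ m := by exact_mod_cast hm4
  have ha0' : (0:ℝ) ≤ a := Nat.cast_nonneg a
  have hb0' : (0:ℝ) ≤ b := Nat.cast_nonneg b
  have ht0' : (0:ℝ) ≤ t := Nat.cast_nonneg t
  have hq0' : (0:ℝ) ≤ q := Nat.cast_nonneg q
  have hd0' : (0:ℝ) ≤ d := Nat.cast_nonneg d
  have hmono : ((m:ℝ)-1)*((m:ℝ)-3) ≤ ((q:ℝ)+d+d)*((q:ℝ)+d+d-2) := by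
    nlinarith [mul_nonneg (sub_nonneg.mpr ht') (by linarith : (0:ℝ) ≤ (q:ℝ)+d+t+(q:ℝ)+d+d-2),
      mul_nonneg (by linarith : (0:ℝ) ≤ (q:ℝ)+d+t+1-m) (by linarith : (0:ℝ) ≤ (m:ℝ)-1+(q:ℝ)+d+t+1-3)]
  by_cases hc : 26 + 7*q ≤ 12*(q+d)
  · have hc' : (26:ℝ) + 7*q ≤ 12*((q:ℝ)+d) := by exact_mod_cast hc
    nlinarith [mul_nonneg hq0' (sub_nonneg.mpr hc'), hmono]
  · push_neg at hc
    have hd2 : d ≤ 2 := by omega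
    have ha0 : a = 0 := by
      rcases Nat.lt_or_ge d 2 with h|h
      · interval_cases d <;> omega
      · have : d = 2 := by omega
        omega
    subst ha0
    have hq3 : 3 ≤ q + 2*d := by omega
    have hq3' : (3:ℝ) ≤ (q:ℝ) + 2*d := by exact_mod_cast hq3
    interval_cases d
    · simp only [Nat.cast_zero] at *; nlinarith [hmono]
    · simp only [Nat.cast_one] at *; nlinarith [hmono]
    · have hq0 : q = 0 := by omega
      subst hq0; simp only [Nat.cast_zero, Nat.cast_ofNat] at *; nlinarith [hmono]

end AuxiliaryForStmt14

theorem stmt14 [Fintype V] [DecidableEq V] (G : SimpleGraph V) [DecidableRel G.Adj]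
    (m : ℕ) (hm : m = G.edgeFinset.card) (hm4 : 4 ≤ m)
    (u v : V) (huv : G.Adj u v) :
    ((m : ℝ) - 1) * ((m : ℝ) - 3) / 8 ≤ (NB2 (contractE G u v) : ℝ) := by
  classical
  have huv' : u ≠ v := huv.ne
  set H := contractE G u v with hHdef
  have hadj : ∀ a b, H.Adj a b ↔
      a ≠ b ∧ a ≠ v ∧ b ≠ v ∧ (G.Adj a b ∨ (a = u ∧ G.Adj v b) ∨ (b = u ∧ G.Adj v a)) :=
    contractE_adj' G huv
  have hEQ : (G.edgeFinset.filter (fun f => ¬ (u ∈ f ∨ v ∈ f)))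
      = G.edgeFinset.filter (fun f => ¬ (u ∈ f ∨ v ∈ f)) := rfl
  set EQ : Finset (Sym2 V) := G.edgeFinset.filter (fun f => ¬ (u ∈ f ∨ v ∈ f)) with hEQdef
  set S : Finset V := ((G.neighborFinset u).erase v) ∪ ((G.neighborFinset v).erase u) with hSdef
  have hSmem : ∀ x, x ∈ S ↔ x ≠ u ∧ x ≠ v ∧ (G.Adj u x ∨ G.Adj v x) := by
    intro x
    simp only [hSdef, Finset.mem_union, Finset.mem_erase, SimpleGraph.mem_neighborFinset]
    constructor
    · rintro (⟨hxv, hx⟩|⟨hxu, hx⟩)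
      · exact ⟨hx.ne', hxv, Or.inl hx⟩
      · exact ⟨hxu, hx.ne', Or.inr hx⟩
    · rintro ⟨hxu, hxv, h|h⟩
      · exact Or.inl ⟨hxv, h⟩
      · exact Or.inr ⟨hxu, h⟩
  have hP1 : ((G.neighborFinset u) ∩ (G.neighborFinset v)).card ≤ S.card := by
    apply Finset.card_le_card
    intro x hx
    simp only [Finset.mem_inter, SimpleGraph.mem_neighborFinset] at hx
    exact (hSmem x).mpr ⟨hx.1.ne', hx.2.ne', Or.inl hx.1⟩
  -- upper bound on the number of edges of G
  have hP2 : m ≤ EQ.card + S.card + ((G.neighborFinset u) ∩ (G.neighborFinset v)).card + 1 := by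
    have hsplitE : (G.edgeFinset.filter (fun f => (u ∈ f ∨ v ∈ f))).card + EQ.card = m := by
      rw [hm, hEQdef]; exact Finset.card_filter_add_card_filter_not _
    set EIN := G.edgeFinset.filter (fun f => (u ∈ f ∨ v ∈ f)) with hEIN
    have hsub : EIN ⊆ insert s(u,v)
        ((((G.neighborFinset u).erase v).image (fun x => s(u,x))) ∪
         (((G.neighborFinset v).erase u).image (fun x => s(v,x)))) := by
      intro f hf
      induction f using Sym2.ind with
      | _ a b =>
        simp only [hEIN, Finset.mem_filter, SimpleGraph.mem_edgeFinset,
          SimpleGraph.mem_edgeSet, Sym2.mem_iff] at hf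
        obtain ⟨hab, hmem⟩ := hf
        simp only [Finset.mem_insert, Finset.mem_union, Finset.mem_image, Finset.mem_erase,
          SimpleGraph.mem_neighborFinset]
        rcases hmem with (ha|hb)|(ha|hb)
        · subst ha
          by_cases hbv : b = v
          · subst hbv; exact Or.inl rfl
          · exact Or.inr (Or.inl ⟨b, ⟨hbv, hab⟩, rfl⟩)
        · subst hb
          by_cases hav : a = v
          · subst hav; exact Or.inl (Sym2.eq_swap)
          · exact Or.inr (Or.inl ⟨a, ⟨hav, hab.symm⟩, Sym2.eq_swap⟩)
        · subst ha
          by_cases hbu : b = u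
          · subst hbu; exact Or.inl (Sym2.eq_swap)
          · exact Or.inr (Or.inr ⟨b, ⟨hbu, hab⟩, rfl⟩)
        · subst hb
          by_cases hau : a = u
          · subst hau; exact Or.inl rfl
          · exact Or.inr (Or.inr ⟨a, ⟨hau, hab.symm⟩, Sym2.eq_swap⟩)
    have hinter : ((G.neighborFinset u).erase v) ∩ ((G.neighborFinset v).erase u)
        = (G.neighborFinset u) ∩ (G.neighborFinset v) := by
      ext x
      simp only [Finset.mem_inter, Finset.mem_erase, SimpleGraph.mem_neighborFinset]
      constructor
      · rintro ⟨⟨_, h1⟩, ⟨_, h2⟩⟩; exact ⟨h1, h2⟩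
      · rintro ⟨h1, h2⟩; exact ⟨⟨h2.ne', h1⟩, ⟨h1.ne', h2⟩⟩
    have hcards : ((G.neighborFinset u).erase v).card + ((G.neighborFinset v).erase u).card
        = S.card + ((G.neighborFinset u) ∩ (G.neighborFinset v)).card := by
      rw [hSdef, ← hinter]; exact (Finset.card_union_add_card_inter _ _).symm
    have himg1 : (((G.neighborFinset u).erase v).image (fun x => s(u,x))).card
        ≤ ((G.neighborFinset u).erase v).card := Finset.card_image_le
    have himg2 : (((G.neighborFinset v).erase u).image (fun x => s(v,x))).card
        ≤ ((G.neighborFinset v).erase u).card := Finset.card_image_le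
    have h1 := Finset.card_le_card hsub
    have h2 := Finset.card_insert_le s(u,v)
        ((((G.neighborFinset u).erase v).image (fun x => s(u,x))) ∪
         (((G.neighborFinset v).erase u).image (fun x => s(v,x))))
    have h3 := Finset.card_union_le
        ((((G.neighborFinset u).erase v).image (fun x => s(u,x))))
        ((((G.neighborFinset v).erase u).image (fun x => s(v,x))))
    omega
  -- lower bound on the number of edges of H
  have hP3 : EQ.card + S.card ≤ H.edgeSet.ncard := by
    set F : Finset (Sym2 V) := EQ ∪ S.image (fun x => s(u,x)) with hF
    have hsub : (F : Set (Sym2 V)) ⊆ H.edgeSet := by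
      intro e he
      simp only [hF, Finset.coe_union, Set.mem_union, Finset.mem_coe, Finset.mem_image] at he
      rcases he with he | he
      · rw [hEQdef] at he
        induction e using Sym2.ind with
        | _ a b =>
          simp only [Finset.mem_filter, SimpleGraph.mem_edgeFinset, SimpleGraph.mem_edgeSet,
            Sym2.mem_iff] at he
          obtain ⟨hab, hmem⟩ := he
          push_neg at hmem
          rw [SimpleGraph.mem_edgeSet, hadj]
          exact ⟨hab.ne, hmem.2.1.symm, hmem.2.2.symm, Or.inl hab⟩
      · obtain ⟨x, hx, rfl⟩ := he
        rw [hSmem] at hx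
        rw [SimpleGraph.mem_edgeSet, hadj]
        refine ⟨fun h => hx.1 h.symm, huv.ne, hx.2.1, ?_⟩
        rcases hx.2.2 with h | h
        · exact Or.inl h
        · exact Or.inr (Or.inl ⟨rfl, h⟩)
    have hdisj : Disjoint EQ (S.image (fun x => s(u,x))) := by
      rw [Finset.disjoint_left]
      intro e he hei
      rw [hEQdef, Finset.mem_filter] at he
      obtain ⟨x, hx, rfl⟩ := Finset.mem_image.mp hei
      exact he.2 (Or.inl (Sym2.mem_mk_left u x))
    have hinj : (S.image (fun x => s(u,x))).card = S.card := by
      apply Finset.card_image_of_injOn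
      intro x hx y hy hxy
      rw [Sym2.eq_iff] at hxy
      rcases hxy with ⟨_, h⟩ | ⟨h1, h2⟩
      · exact h
      · exact absurd h2 ((hSmem x).mp hx).1
    have hcard : F.card = EQ.card + S.card := by
      rw [hF, Finset.card_union_of_disjoint hdisj, hinj]
    calc EQ.card + S.card = (F : Set (Sym2 V)).ncard := by rw [Set.ncard_coe_finset, hcard]
      _ ≤ H.edgeSet.ncard := Set.ncard_le_ncard hsub (Set.toFinite _)
  -- triangles
  set T : Finset (Finset V) := Finset.univ.filter (fun s : Finset V => H.IsNClique 3 s) with hT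
  have hTC : triangleCount H = T.card := by
    rw [triangleCount]
    rw [show {s : Finset V | H.IsNClique 3 s} = (T : Set (Finset V)) by
      ext s; simp [hT]]
    exact Set.ncard_coe_finset T
  set T1 : Finset (Finset V) := T.filter (fun s => u ∈ s) with hT1
  set T2 : Finset (Finset V) := T.filter (fun s => u ∉ s) with hT2
  have hsplit : triangleCount H ≤ T1.card + T2.card := by
    rw [hTC, hT1, hT2, Finset.card_filter_add_card_filter_not]
  have hTfact : ∀ s ∈ T, s.card = 3 ∧ (∀ x ∈ s, ∀ y ∈ s, x ≠ y → H.Adj x y) := by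
    intro s hs
    rw [hT, Finset.mem_filter] at hs
    exact ⟨hs.2.2, fun x hx y hy hxy => hs.2.1 hx hy hxy⟩
  have hvnot : ∀ s ∈ T, v ∉ s := by
    intro s hs hv
    obtain ⟨hcard, hcl⟩ := hTfact s hs
    obtain ⟨w, hw, hwv⟩ := Finset.exists_mem_ne (s := s) (by omega) v
    exact ((hadj v w).mp (hcl v hv w hw (Ne.symm hwv))).2.1 rfl
  have hGadj : ∀ s ∈ T2, ∀ x ∈ s, ∀ y ∈ s, x ≠ y → G.Adj x y ∧ x ≠ u ∧ x ≠ v := by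
    intro s hs x hx y hy hxy
    rw [hT2, Finset.mem_filter] at hs
    have hcl := (hTfact s hs.1).2
    have hx_u : x ≠ u := fun h => hs.2 (h ▸ hx)
    have hy_u : y ≠ u := fun h => hs.2 (h ▸ hy)
    have hx_v : x ≠ v := fun h => hvnot s hs.1 (h ▸ hx)
    have h := (hadj x y).mp (hcl x hx y hy hxy)
    refine ⟨?_, hx_u, hx_v⟩
    rcases h.2.2.2 with h'|⟨h1,_⟩|⟨h1,_⟩
    · exact h'
    · exact absurd h1 hx_u
    · exact absurd h1 hy_u
  have hT1fact : ∀ s ∈ T1, ∃ x y, x ≠ y ∧ s.erase u = {x,y} ∧ G.Adj x y ∧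
      x ∈ S ∧ y ∈ S ∧ s(x,y) ∈ EQ := by
    intro s hs
    rw [hT1, Finset.mem_filter] at hs
    obtain ⟨hsT, hus⟩ := hs
    obtain ⟨hcard, hcl⟩ := hTfact s hsT
    have hc2 : (s.erase u).card = 2 := by rw [Finset.card_erase_of_mem hus, hcard]
    obtain ⟨x, y, hxy, hexy⟩ := Finset.card_eq_two.mp hc2
    have hxs : x ∈ s.erase u := hexy ▸ (by simp)
    have hys : y ∈ s.erase u := hexy ▸ (by simp)
    have hxu : x ≠ u := (Finset.mem_erase.mp hxs).1
    have hyu : y ≠ u := (Finset.mem_erase.mp hys).1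
    have hxs' : x ∈ s := Finset.mem_of_mem_erase hxs
    have hys' : y ∈ s := Finset.mem_of_mem_erase hys
    have hxv : x ≠ v := fun h => hvnot s hsT (h ▸ hxs')
    have hyv : y ≠ v := fun h => hvnot s hsT (h ▸ hys')
    have hadjxy := (hadj x y).mp (hcl x hxs' y hys' hxy)
    have hGxy : G.Adj x y := by
      rcases hadjxy.2.2.2 with h'|⟨h1,_⟩|⟨h1,_⟩
      · exact h'
      · exact absurd h1 hxu
      · exact absurd h1 hyu
    have hSx : x ∈ S := by
      have hadjux := (hadj u x).mp (hcl u hus x hxs' (Ne.symm hxu))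
      refine (hSmem x).mpr ⟨hxu, hxv, ?_⟩
      rcases hadjux.2.2.2 with h'|⟨_,h2⟩|⟨h1,_⟩
      · exact Or.inl h'
      · exact Or.inr h2
      · exact absurd h1 hxu
    have hSy : y ∈ S := by
      have hadjuy := (hadj u y).mp (hcl u hus y hys' (Ne.symm hyu))
      refine (hSmem y).mpr ⟨hyu, hyv, ?_⟩
      rcases hadjuy.2.2.2 with h'|⟨_,h2⟩|⟨h1,_⟩
      · exact Or.inl h'
      · exact Or.inr h2
      · exact absurd h1 hyu
    refine ⟨x, y, hxy, hexy, hGxy, hSx, hSy, ?_⟩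
    rw [hEQdef, Finset.mem_filter]
    refine ⟨SimpleGraph.mem_edgeFinset.mpr hGxy, ?_⟩
    rw [Sym2.mem_iff, Sym2.mem_iff]
    push_neg
    exact ⟨⟨fun h => hxu h.symm, fun h => hyu h.symm⟩, ⟨fun h => hxv h.symm, fun h => hyv h.symm⟩⟩
  have hT1inj : Set.InjOn (fun s : Finset V => s.erase u) (T1 : Set (Finset V)) := by
    intro s hs s' hs' h
    have hus : u ∈ s := (Finset.mem_filter.mp (Finset.mem_coe.mp hs)).2
    have hus' : u ∈ s' := (Finset.mem_filter.mp (Finset.mem_coe.mp hs')).2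
    rw [← Finset.insert_erase hus, ← Finset.insert_erase hus']
    simp only at h
    rw [h]
  have hEQ2card : (EQ.image sym2pair).card = EQ.card := by
    apply Finset.card_image_of_injOn
    intro e he e' he' hee
    have hnd : ¬ e.IsDiag := by
      rw [hEQdef] at he
      exact G.not_isDiag_of_mem_edgeSet
        (SimpleGraph.mem_edgeFinset.mp (Finset.mem_filter.mp (Finset.mem_coe.mp he)).1)
    induction e, e' using Sym2.inductionOn₂ with
    | _ x y a b =>
      rw [Sym2.mk_isDiag_iff] at hnd
      exact pair_eq_sym2 hnd hee
  have hA1 : T1.card ≤ EQ.card := by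
    rw [← hEQ2card]
    apply Finset.card_le_card_of_injOn (fun s => s.erase u) _ hT1inj
    intro s hs
    obtain ⟨x, y, hxy, hexy, _, _, _, hEQm⟩ := hT1fact s hs
    beta_reduce
    rw [Finset.mem_coe, Finset.mem_image]
    exact ⟨s(x,y), hEQm, hexy.symm⟩
  have hA2 : T1.card ≤ Nat.choose S.card 2 := by
    rw [← Finset.card_powersetCard 2 S]
    apply Finset.card_le_card_of_injOn (fun s => s.erase u) _ hT1inj
    intro s hs
    obtain ⟨x, y, hxy, hexy, _, hSx, hSy, _⟩ := hT1fact s hs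
    beta_reduce
    rw [Finset.mem_coe, Finset.mem_powersetCard]
    constructor
    · rw [hexy]
      intro z hz
      simp only [Finset.mem_insert, Finset.mem_singleton] at hz
      rcases hz with rfl|rfl
      · exact hSx
      · exact hSy
    · rw [hexy]; exact Finset.card_pair hxy
  have pairInj : ∀ (x c c' : V), c ≠ x → ({x,c} : Finset V) = {x,c'} → c = c' := by
    intro x c c' hcx h
    have : c ∈ ({x,c'} : Finset V) := h ▸ (by simp)
    simp only [Finset.mem_insert, Finset.mem_singleton] at this
    rcases this with rfl|rfl
    · exact absurd rfl hcx
    · rfl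
  have hT2fact : ∀ p : (_ : Finset V) × V, p ∈ T2.sigma (fun s => s) →
      ∃ y z, y ≠ z ∧ p.1.erase p.2 = {y,z} ∧
        (p.1.erase p.2).image (fun c => ({p.2, c} : Finset V)) = {{p.2,y},{p.2,z}} ∧
        ({p.2,y} : Finset V) ≠ {p.2,z} ∧ y ≠ p.2 ∧ z ≠ p.2 := by
    rintro ⟨s, x⟩ hp
    rw [Finset.mem_sigma] at hp
    obtain ⟨hsT2, hxs⟩ := hp
    have hsT : s ∈ T := (Finset.mem_filter.mp hsT2).1
    have hcard := (hTfact s hsT).1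
    have hc2 : (s.erase x).card = 2 := by rw [Finset.card_erase_of_mem hxs, hcard]
    obtain ⟨y, z, hyz, heyz⟩ := Finset.card_eq_two.mp hc2
    have hys : y ∈ s.erase x := heyz ▸ (by simp)
    have hzs : z ∈ s.erase x := heyz ▸ (by simp)
    have hyx : y ≠ x := (Finset.mem_erase.mp hys).1
    have hzx : z ≠ x := (Finset.mem_erase.mp hzs).1
    refine ⟨y, z, hyz, heyz, ?_, ?_, hyx, hzx⟩
    · rw [heyz, Finset.image_insert, Finset.image_singleton]
    · intro h
      exact hyz (pairInj x y z hyx h)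
  have hB3 : 3 * T2.card ≤ Nat.choose EQ.card 2 := by
    have hdom : (T2.sigma (fun s => s)).card = 3 * T2.card := by
      rw [Finset.card_sigma]
      rw [Finset.sum_congr rfl (fun s hs => (hTfact s (Finset.mem_filter.mp hs).1).1)]
      rw [Finset.sum_const, smul_eq_mul, mul_comm]
    rw [← hdom, ← hEQ2card, ← Finset.card_powersetCard 2 (EQ.image sym2pair)]
    apply Finset.card_le_card_of_injOn
      (fun p => (p.1.erase p.2).image (fun c => ({p.2, c} : Finset V)))
    · rintro ⟨s, x⟩ hp
      have hp' := hp
      rw [Finset.mem_coe, Finset.mem_sigma] at hp'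
      obtain ⟨hsT2, hxs⟩ := hp'
      obtain ⟨y, z, hyz, heyz, himg, hne, hyx, hzx⟩ := hT2fact ⟨s,x⟩ hp
      have heyz2 : s.erase x = {y,z} := heyz
      have hys : y ∈ s := Finset.mem_of_mem_erase (by rw [heyz2]; simp)
      have hzs : z ∈ s := Finset.mem_of_mem_erase (by rw [heyz2]; simp)
      have hedge : ∀ c ∈ s, c ≠ x → ({x, c} : Finset V) ∈ EQ.image sym2pair := by
        intro c hc hcx
        obtain ⟨hGxc, hxu, hxv⟩ := hGadj s hsT2 x hxs c hc (Ne.symm hcx)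
        obtain ⟨_, hcu, hcv⟩ := hGadj s hsT2 c hc x hxs hcx
        rw [Finset.mem_image]
        refine ⟨s(x,c), ?_, rfl⟩
        rw [hEQdef, Finset.mem_filter]
        refine ⟨SimpleGraph.mem_edgeFinset.mpr hGxc, ?_⟩
        rw [Sym2.mem_iff, Sym2.mem_iff]
        push_neg
        exact ⟨⟨fun h => hxu h.symm, fun h => hcu h.symm⟩,
               ⟨fun h => hxv h.symm, fun h => hcv h.symm⟩⟩
      beta_reduce
      rw [Finset.mem_coe, Finset.mem_powersetCard, himg]
      constructor
      · intro w hw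
        simp only [Finset.mem_insert, Finset.mem_singleton] at hw
        rcases hw with rfl|rfl
        · exact hedge y hys hyx
        · exact hedge z hzs hzx
      · exact Finset.card_pair hne
    · rintro ⟨s, x⟩ hp ⟨s', x'⟩ hp' heq
      simp only [Finset.mem_coe] at hp hp'
      obtain ⟨y, z, hyz, heyz, himg, hne, hyx, hzx⟩ := hT2fact ⟨s,x⟩ hp
      obtain ⟨y', z', hyz', heyz', himg', hne', hyx', hzx'⟩ := hT2fact ⟨s',x'⟩ hp'
      simp only at heq
      rw [himg, himg'] at heq
      have hxx : x = x' := by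
        by_contra hxx
        have h1 : ({x,y} : Finset V) ∈ ({({x',y'} : Finset V), {x',z'}} : Finset (Finset V)) :=
          heq ▸ (by simp)
        have h2 : ({x,z} : Finset V) ∈ ({({x',y'} : Finset V), {x',z'}} : Finset (Finset V)) :=
          heq ▸ (by simp)
        simp only [Finset.mem_insert, Finset.mem_singleton] at h1 h2
        have key : ∀ c : V, ({x,c} : Finset V) = {x',y'} ∨ ({x,c} : Finset V) = {x',z'} →
            x' = c := by
          intro c hc
          rcases hc with hc|hc
          · have : x' ∈ ({x,c} : Finset V) := hc ▸ (by simp)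
            simp only [Finset.mem_insert, Finset.mem_singleton] at this
            rcases this with h|h
            · exact absurd h.symm hxx
            · exact h
          · have : x' ∈ ({x,c} : Finset V) := hc ▸ (by simp)
            simp only [Finset.mem_insert, Finset.mem_singleton] at this
            rcases this with h|h
            · exact absurd h.symm hxx
            · exact h
        have hy' := key y h1
        have hz' := key z h2
        exact hyz (hy'.symm.trans hz')
      subst hxx
      have hinj : Function.Injective (fun c => ({x, c} : Finset V)) := by
        intro c c' hcc
        simp only at hcc
        by_cases hcx : c = x
        · subst hcx
          have : c' ∈ ({c,c} : Finset V) := hcc ▸ (by simp)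
          simp only [Finset.mem_insert, Finset.mem_singleton, or_self] at this
          exact this.symm
        · exact pairInj x c c' hcx hcc
      have himg2 : (s.erase x).image (fun c => ({x, c} : Finset V)) = {{x,y},{x,z}} := himg
      have himg2' : (s'.erase x).image (fun c => ({x, c} : Finset V)) = {{x,y'},{x,z'}} := himg'
      have heq2 : ({({x,y} : Finset V), {x,z}} : Finset (Finset V)) = {{x,y'},{x,z'}} := heq
      have h5 : (s.erase x).image (fun c => ({x, c} : Finset V))
          = (s'.erase x).image (fun c => ({x, c} : Finset V)) := by
        rw [himg2, himg2', heq2]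
      have h6 : s.erase x = s'.erase x := Finset.image_injective hinj h5
      rw [Finset.mem_sigma] at hp hp'
      have hx1 : x ∈ s := hp.2
      have hx2 : x ∈ s' := hp'.2
      have hss : s = s' := by
        rw [← Finset.insert_erase hx1, ← Finset.insert_erase hx2, h6]
      subst hss
      rfl
  -- final assembly
  have ha2 : 2 * T1.card ≤ S.card * (S.card - 1) := by
    have h := hA2
    rw [Nat.choose_two_right] at h
    set k := S.card * (S.card - 1) with hk
    omega
  have hb3 : 6 * T2.card ≤ EQ.card * (EQ.card - 1) := by
    have h := hB3
    rw [Nat.choose_two_right] at h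
    set k := EQ.card * (EQ.card - 1) with hk
    omega
  have harith := arith_main EQ.card S.card ((G.neighborFinset u) ∩ (G.neighborFinset v)).card
    T1.card T2.card m hA1 ha2 hb3 hP1 hP2 hm4
  have hcast : (((EQ.card + S.card).choose 2 : ℕ) : ℝ)
      = ((EQ.card:ℝ)+S.card)*((EQ.card:ℝ)+(S.card:ℝ)-1)/2 := by
    rw [Nat.cast_choose_two]; push_cast; ring
  have hchoose : (((EQ.card + S.card).choose 2 : ℕ) : ℝ)
      ≤ (((H.edgeSet.ncard).choose 2 : ℕ) : ℝ) :=
    Nat.cast_le.mpr (Nat.choose_le_choose 2 hP3)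
  have htri : (triangleCount H : ℝ) ≤ (T1.card : ℝ) + T2.card := by exact_mod_cast hsplit
  have hNB : (((H.edgeSet.ncard).choose 2 : ℕ) : ℝ) - triangleCount H ≤ (NB2 H : ℝ) := by
    rw [NB2]
    rcases le_total (triangleCount H) ((H.edgeSet.ncard).choose 2) with h|h
    · rw [Nat.cast_sub h]
    · rw [Nat.sub_eq_zero_of_le h]
      have := (Nat.cast_le (α := ℝ)).mpr h
      push_cast at this ⊢
      linarith
  linarith
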